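/- Let p, m be integers with m ≥ p ≥ 1, let t_1 ≤ t_2 ≤ … ≤ t_p be real numbers and let s_1 ≥ s_2 ≥ … ≥ s_m be real numbers. Then for every injective map c : {1,…,p} → {1,…,m}: max( s_1, max_{i ∈ {1,…,p}} ( t_i + s_{c_i} ) ) ≥ max( s_1, max_{i ∈ {1,…,p}} ( t_i + s_{m-p+i} ) ). Consequently, the minimum over all injective c : {1,…,p} → {1,…,m} of max( s_1, max_i ( t_i + s_{c_i} ) ) equals max( s_1, max_i ( t_i + s_{m-p+i} ) ), and it is attained at c_i = m - p + i. -/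
import Mathlib

lemma exists_index_ge {p m : ℕ} (hpm : p ≤ m) (c : Fin p → Fin m)
    (hc : Function.Injective c) (i : Fin p) :
    ∃ j : Fin p, i ≤ j ∧ (c j : ℕ) ≤ m - p + i := by
  by_contra h
  push_neg at h
  have hi := i.isLt
  have hsub : (Finset.Ici i).image c ⊆ Finset.Ioi (⟨m - p + i, by omega⟩ : Fin m) := by
    intro k hk
    simp only [Finset.mem_image, Finset.mem_Ici] at hk
    obtain ⟨j, hij, rfl⟩ := hk
    simpa [Finset.mem_Ioi, Fin.lt_def] using h j hij
  have hcard := Finset.card_le_card hsub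
  rw [Finset.card_image_of_injective _ hc, Fin.card_Ici, Fin.card_Ioi] at hcard
  simp only at hcard
  omega

/-- Among all injective families of indices `c : {1,…,p} → {1,…,m}` (with
`t_1 ≤ … ≤ t_p` and `s_1 ≥ … ≥ s_m`), the quantity
`max (s_1, max_i (t_i + s_{c_i}))` is bounded below by its value for the choice
`c_i = m - p + i`; consequently the minimum over all injective `c` is attained
at this choice. -/
theorem optimal_indices {p m : ℕ} (hp : 1 ≤ p) (hpm : p ≤ m)
    (t : Fin p → ℝ) (ht : Monotone t)
    (s : Fin m → ℝ) (hs : Antitone s) :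
    (∀ c : Fin p → Fin m, Function.Injective c →
        max (s ⟨0, lt_of_lt_of_le hp hpm⟩)
            (Finset.univ.sup' ⟨⟨0, hp⟩, Finset.mem_univ _⟩
              fun i : Fin p => t i + s (c i)) ≥
          max (s ⟨0, lt_of_lt_of_le hp hpm⟩)
            (Finset.univ.sup' ⟨⟨0, hp⟩, Finset.mem_univ _⟩
              fun i : Fin p => t i + s ⟨m - p + (i : ℕ), by have := i.isLt; omega⟩)) ∧
      IsLeast
        {T : ℝ | ∃ c : Fin p → Fin m, Function.Injective c ∧
            T = max (s ⟨0, lt_of_lt_of_le hp hpm⟩)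
              (Finset.univ.sup' ⟨⟨0, hp⟩, Finset.mem_univ _⟩
                fun i : Fin p => t i + s (c i))}
        (max (s ⟨0, lt_of_lt_of_le hp hpm⟩)
          (Finset.univ.sup' ⟨⟨0, hp⟩, Finset.mem_univ _⟩
            fun i : Fin p => t i + s ⟨m - p + (i : ℕ), by have := i.isLt; omega⟩)) := by
  have key : ∀ c : Fin p → Fin m, Function.Injective c →
      max (s ⟨0, lt_of_lt_of_le hp hpm⟩)
          (Finset.univ.sup' ⟨⟨0, hp⟩, Finset.mem_univ _⟩
            fun i : Fin p => t i + s (c i)) ≥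
        max (s ⟨0, lt_of_lt_of_le hp hpm⟩)
          (Finset.univ.sup' ⟨⟨0, hp⟩, Finset.mem_univ _⟩
            fun i : Fin p => t i + s ⟨m - p + (i : ℕ), by have := i.isLt; omega⟩) := by
    intro c hc
    apply max_le_max le_rfl
    apply Finset.sup'_le
    intro i _
    obtain ⟨j, hij, hj⟩ := exists_index_ge hpm c hc i
    calc t i + s ⟨m - p + (i : ℕ), by have := i.isLt; omega⟩
        ≤ t j + s (c j) := by
          apply add_le_add (ht hij)
          exact hs (by simpa [Fin.le_def] using hj)
      _ ≤ _ := Finset.le_sup' (fun i : Fin p => t i + s (c i)) (Finset.mem_univ j)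
  refine ⟨key, ⟨⟨fun i => ⟨m - p + (i : ℕ), by have := i.isLt; omega⟩, ?_, rfl⟩, ?_⟩⟩
  · intro a b hab
    have := congrArg Fin.val hab
    simp only at this
    have ha := a.isLt
    exact Fin.ext (by omega)
  · rintro T ⟨c, hc, rfl⟩
    exact key c hc
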